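/- Each of the four inequalities γ_{2n} > 0, γ_{2n} < 0, γ_{2n−1} > 0, γ_{2n−1} < 0 holds for infinitely many positive integers n, where γ_k are the Stieltjes constants of the Riemann zeta function. -/

import Mathlib

open Filter Complex Real

private lemma limit_le_zero {b B : ℝ} {v : ℕ → ℝ}
    (hv : Tendsto v atTop atTop)
    (h : ∀ k, b ≤ B / v k) : b ≤ 0 := by
  have h2 : Tendsto (fun k => B / v k) atTop (nhds 0) :=
    Tendsto.div_atTop tendsto_const_nhds hv
  exact ge_of_tendsto h2 (Eventually.of_forall h)

private lemma lemD {c : ℕ → ℝ} {v : ℕ → ℝ} (hv1 : ∀ k, 1 ≤ v k)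
    (hv : Tendsto v atTop atTop)
    {S : ℕ → ℝ} (hS : ∀ k, HasSum (fun m => c m * v k ^ m) (S k))
    {B : ℝ} (hB : ∀ k, |S k| ≤ B)
    {N : ℕ} (hN : 1 ≤ N)
    (hsign : (∀ m, N ≤ m → 0 ≤ c m) ∨ (∀ m, N ≤ m → c m ≤ 0)) :
    ∀ k, S k = c 0 := by
  have hv0 : ∀ k, (0:ℝ) < v k := fun k => lt_of_lt_of_le one_pos (hv1 k)
  obtain ⟨σ, hσ1, hσs⟩ : ∃ σ : ℝ, (σ = 1 ∨ σ = -1) ∧ ∀ m, N ≤ m → 0 ≤ σ * c m := by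
    rcases hsign with h | h
    · exact ⟨1, Or.inl rfl, fun m hm => by simpa using h m hm⟩
    · exact ⟨-1, Or.inr rfl, fun m hm => by nlinarith [h m hm]⟩
  have hσabs : |σ| = 1 := by rcases hσ1 with h | h <;> simp [h]
  -- head bound
  have hhead : ∀ (k : ℕ) (M : ℕ), |∑ m ∈ Finset.range M, c m * v k ^ m|
      ≤ (∑ m ∈ Finset.range M, |c m|) * v k ^ (M - 1) := by
    intro k M
    calc |∑ m ∈ Finset.range M, c m * v k ^ m| ≤ ∑ m ∈ Finset.range M, |c m * v k ^ m| :=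
          Finset.abs_sum_le_sum_abs _ _
      _ ≤ ∑ m ∈ Finset.range M, |c m| * v k ^ (M-1) := by
          apply Finset.sum_le_sum
          intro m hm
          rw [abs_mul, _root_.abs_of_nonneg (le_of_lt (pow_pos (hv0 k) m))]
          exact mul_le_mul_of_nonneg_left
            (pow_le_pow_right₀ (hv1 k) (by have := Finset.mem_range.mp hm; omega))
            (abs_nonneg _)
      _ = _ := by rw [Finset.sum_mul]
  -- tail coefficients vanish
  have hzero : ∀ m, N ≤ m → c m = 0 := by
    intro m hm
    set C : ℝ := ∑ i ∈ Finset.range N, |c i| with hCdef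
    have hC0 : 0 ≤ C := Finset.sum_nonneg fun _ _ => abs_nonneg _
    have hp1 : ∀ k, (1:ℝ) ≤ v k ^ (N-1) := fun k => one_le_pow₀ (hv1 k)
    have hb : ∀ k, σ * c m ≤ (|B| + C) / v k := by
      intro k
      rw [le_div_iff₀ (hv0 k)]
      have h1 : HasSum (fun n => c (n+N) * v k ^ (n+N))
          (S k - ∑ i ∈ Finset.range N, c i * v k ^ i) := by
        apply (hasSum_nat_add_iff (f := fun m => c m * v k ^ m) N).mpr
        rw [sub_add_cancel]
        exact hS k
      have h2 := h1.mul_left σ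
      have h3 : σ * (c m * v k ^ m) ≤ σ * (S k - ∑ i ∈ Finset.range N, c i * v k ^ i) := by
        have h4 := le_hasSum h2 (m - N) (fun j _ => by
          have h5 := hσs (j+N) (by omega)
          have h6 : 0 ≤ (σ * c (j+N)) * v k ^ (j+N) :=
            mul_nonneg h5 (le_of_lt (pow_pos (hv0 k) _))
          linarith [h6])
        simpa [Nat.sub_add_cancel hm] using h4
      have h5 : σ * (S k - ∑ i ∈ Finset.range N, c i * v k ^ i) ≤ |B| + C * v k ^ (N-1) := by
        have h6 : |σ * (S k - ∑ i ∈ Finset.range N, c i * v k ^ i)| ≤ |B| + C * v k ^ (N-1) := by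
          rw [abs_mul, hσabs, one_mul]
          calc |S k - ∑ i ∈ Finset.range N, c i * v k ^ i|
              ≤ |S k| + |∑ i ∈ Finset.range N, c i * v k ^ i| := abs_sub _ _
            _ ≤ |B| + C * v k ^ (N-1) :=
                add_le_add ((hB k).trans (le_abs_self B)) (hhead k N)
        exact (le_abs_self _).trans h6
      have h7 : (σ * c m) * (v k * v k ^ (N-1)) ≤ σ * (c m * v k ^ m) := by
        have hvN : v k * v k ^ (N-1) = v k ^ N := by
          rw [← pow_succ']; congr 1; omega
        rw [hvN, show σ * (c m * v k ^ m) = (σ * c m) * v k ^ m from by ring]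
        exact mul_le_mul_of_nonneg_left (pow_le_pow_right₀ (hv1 k) hm) (hσs m hm)
      have key : (σ * c m * v k) * v k ^ (N-1) ≤ (|B| + C) * v k ^ (N-1) := by
        calc (σ * c m * v k) * v k ^ (N-1) = (σ * c m) * (v k * v k ^ (N-1)) := by ring
          _ ≤ σ * (c m * v k ^ m) := h7
          _ ≤ σ * (S k - ∑ i ∈ Finset.range N, c i * v k ^ i) := h3
          _ ≤ |B| + C * v k ^ (N-1) := h5
          _ ≤ (|B| + C) * v k ^ (N-1) := by nlinarith [hp1 k, abs_nonneg B]
      exact le_of_mul_le_mul_right key (pow_pos (hv0 k) (N-1))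
    have h10 : σ * c m ≤ 0 := limit_le_zero hv hb
    have h11 : σ * c m = 0 := le_antisymm h10 (hσs m hm)
    rcases hσ1 with h | h <;> rw [h] at h11 <;> linarith
  -- each S k equals the head polynomial
  have hSP : ∀ k, S k = ∑ m ∈ Finset.range N, c m * v k ^ m := by
    intro k
    have h1 : HasSum (fun m => c m * v k ^ m) (∑ m ∈ Finset.range N, c m * v k ^ m) := by
      apply hasSum_sum_of_ne_finset_zero
      intro m hm
      rw [hzero m (Nat.le_of_not_lt (by simpa using hm))]
      ring
    exact (hS k).unique h1
  -- downward induction on the degree of the polynomial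
  have key : ∀ M, (∀ k, S k = ∑ m ∈ Finset.range (M+1), c m * v k ^ m) → ∀ k, S k = c 0 := by
    intro M
    induction M with
    | zero => intro h k; simpa using h k
    | succ M ih =>
      intro h
      have hM1 : c (M+1+1-1) = 0 := by
        set D : ℝ := ∑ i ∈ Finset.range (M+1), |c i| with hDdef
        have hD0 : 0 ≤ D := Finset.sum_nonneg fun _ _ => abs_nonneg _
        have hb : ∀ k, |c (M+1)| ≤ (|B| + D) / v k := by
          intro k
          rw [le_div_iff₀ (hv0 k)]
          have heq : c (M+1) * v k ^ (M+1) = S k - ∑ m ∈ Finset.range (M+1), c m * v k ^ m := by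
            have h1 := h k
            rw [Finset.sum_range_succ] at h1
            linarith
          have h1 : |c (M+1)| * v k ^ (M+1) ≤ |B| + D * v k ^ M := by
            rw [← _root_.abs_of_nonneg (le_of_lt (pow_pos (hv0 k) (M+1))), ← abs_mul, heq]
            calc |S k - ∑ m ∈ Finset.range (M+1), c m * v k ^ m|
                ≤ |S k| + |∑ m ∈ Finset.range (M+1), c m * v k ^ m| := abs_sub _ _
              _ ≤ |B| + D * v k ^ M := by
                  have := hhead k (M+1)
                  simp only [Nat.add_sub_cancel] at this
                  exact add_le_add ((hB k).trans (le_abs_self B)) this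
          have key2 : (|c (M+1)| * v k) * v k ^ M ≤ (|B| + D) * v k ^ M := by
            calc (|c (M+1)| * v k) * v k ^ M = |c (M+1)| * (v k * v k ^ M) := by ring
              _ = |c (M+1)| * v k ^ (M+1) := by rw [← pow_succ']
              _ ≤ |B| + D * v k ^ M := h1
              _ ≤ (|B| + D) * v k ^ M := by nlinarith [one_le_pow₀ (hv1 k) (n := M), abs_nonneg B]
          exact le_of_mul_le_mul_right key2 (pow_pos (hv0 k) M)
        have h10 : |c (M+1)| ≤ 0 := limit_le_zero hv hb
        simpa using le_antisymm h10 (abs_nonneg _)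
      simp only [Nat.add_sub_cancel] at hM1
      apply ih
      intro k
      rw [h k, Finset.sum_range_succ, hM1]
      ring
  have hfin : ∀ k, S k = ∑ m ∈ Finset.range ((N-1)+1), c m * v k ^ m := by
    intro k
    rw [hSP k]
    congr 2
    omega
  exact key (N-1) hfin

private lemma zeta_norm_le {σ : ℝ} (hσ : 2 ≤ σ) : ‖riemannZeta σ‖ ≤ 2 := by
  have hre : 1 < (σ:ℂ).re := by simp; linarith
  rw [zeta_eq_tsum_one_div_nat_add_one_cpow hre]
  have hterm : ∀ n : ℕ, ‖(1 : ℂ) / ((n:ℂ) + 1) ^ (σ:ℂ)‖ = 1 / ((n:ℝ)+1) ^ σ := by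
    intro n
    rw [norm_div, norm_one]
    congr 1
    have h1 : ((n:ℂ)+1) = ((((n:ℝ)+1) : ℝ) : ℂ) := by push_cast; ring
    rw [h1, ← Complex.ofReal_cpow (by positivity), Complex.norm_real]
    exact Real.norm_of_nonneg (by positivity)
  have hg : HasSum (fun n : ℕ => 1/((n:ℝ)+1)^2) (π^2/6) := by
    have h0 := (hasSum_nat_add_iff (f := fun n : ℕ => 1/(n:ℝ)^2) 1).mpr
      (by simpa using hasSum_zeta_two)
    convert h0 using 2 with n
    rfl
    push_cast; ring
  have hgs : Summable (fun n : ℕ => 1/((n:ℝ)+1)^2) := hg.summable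
  have hcomp : ∀ n : ℕ, 1 / ((n:ℝ)+1) ^ σ ≤ 1/((n:ℝ)+1)^2 := by
    intro n
    have hb : (1:ℝ) ≤ (n:ℝ)+1 := by have := Nat.cast_nonneg (α := ℝ) n; linarith
    have h2 : ((n:ℝ)+1)^(2:ℝ) ≤ ((n:ℝ)+1)^σ := Real.rpow_le_rpow_of_exponent_le hb hσ
    have h2' : ((n:ℝ)+1)^(2:ℕ) ≤ ((n:ℝ)+1)^σ := by
      rw [← Real.rpow_natCast ((n:ℝ)+1) 2]; exact_mod_cast h2
    exact one_div_le_one_div_of_le (by positivity) h2'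
  have hsn : Summable (fun n : ℕ => ‖(1 : ℂ) / ((n:ℂ) + 1) ^ (σ:ℂ)‖) := by
    rw [funext hterm]
    exact hgs.of_nonneg_of_le (fun n => by positivity) hcomp
  calc ‖∑' n : ℕ, (1 : ℂ) / ((n:ℂ) + 1) ^ (σ:ℂ)‖
      ≤ ∑' n : ℕ, ‖(1 : ℂ) / ((n:ℂ) + 1) ^ (σ:ℂ)‖ := norm_tsum_le_tsum_norm hsn
    _ ≤ ∑' n : ℕ, 1/((n:ℝ)+1)^2 := by
        apply Summable.tsum_le_tsum _ hsn hgs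
        intro n; rw [hterm n]; exact hcomp n
    _ = π^2/6 := hg.tsum_eq
    _ ≤ 2 := by nlinarith [pi_lt_d2, pi_gt_three]

section parts

variable {γ : ℕ → ℝ}
  (hγ : ∀ s : ℂ, s ≠ 1 →
      HasSum (fun n : ℕ => (γ n : ℂ) * (s - 1) ^ n) (riemannZeta s - 1 / (s - 1)))

include hγ

private lemma both_parts {x : ℝ} (hx : x ≠ 0) :
    HasSum (fun n : ℕ => (γ n : ℂ) * ((x:ℂ)^n + (-x:ℂ)^n))
      (riemannZeta (1+x) + riemannZeta (1-x)) ∧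
    HasSum (fun n : ℕ => (γ n : ℂ) * ((x:ℂ)^n - (-x:ℂ)^n))
      (riemannZeta (1+x) - riemannZeta (1-x) - 2/x) := by
  have hx1 : (1 + (x:ℂ)) ≠ 1 := by
    intro h
    apply hx
    have : (x:ℂ) = 0 := by linear_combination h
    exact_mod_cast this
  have hx2 : (1 - (x:ℂ)) ≠ 1 := by
    intro h
    apply hx
    have : (x:ℂ) = 0 := by linear_combination -h
    exact_mod_cast this
  have h1 := hγ (1 + x) hx1
  have h2 := hγ (1 - x) hx2
  have e1 : (1 + (x:ℂ)) - 1 = x := by ring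
  have e2 : (1 - (x:ℂ)) - 1 = -x := by ring
  rw [e1] at h1
  rw [e2] at h2
  constructor
  · have h3 := h1.add h2
    have e3 : riemannZeta (1+(x:ℂ)) - 1/(x:ℂ) + (riemannZeta (1-(x:ℂ)) - 1/(-(x:ℂ)))
        = riemannZeta (1+x) + riemannZeta (1-x) := by
      rw [div_neg]; ring
    rw [e3] at h3
    convert h3 using 2 with n
    ring
  · have h3 := h1.sub h2
    have e3 : riemannZeta (1+(x:ℂ)) - 1/(x:ℂ) - (riemannZeta (1-(x:ℂ)) - 1/(-(x:ℂ)))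
        = riemannZeta (1+x) - riemannZeta (1-x) - 2/x := by
      rw [div_neg]; ring
    rw [e3] at h3
    convert h3 using 2 with n
    rfl
    ring

private lemma even_part {x : ℝ} (hx : x ≠ 0) :
    HasSum (fun m : ℕ => (2 * γ (2*m)) * (x^2) ^ m)
      ((riemannZeta (1+x) + riemannZeta (1-x)).re) := by
  have h3 := (both_parts hγ hx).1
  have hinj : Function.Injective (fun m : ℕ => 2*m) := fun a b h => by simp only at h; omega
  have hcov : ∀ n : ℕ, n ∉ Set.range (fun m : ℕ => 2*m) →
      (γ n : ℂ) * ((x:ℂ)^n + (-x:ℂ)^n) = 0 := by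
    intro n hn
    simp only [Set.mem_range, not_exists] at hn
    rcases Nat.even_or_odd n with ⟨r, hr⟩ | ho
    · exact absurd (show 2*r = n by omega) (hn r)
    · rw [ho.neg_pow]; ring
  have h4 : HasSum (fun m : ℕ => (γ (2*m) : ℂ) * ((x:ℂ)^(2*m) + (-x:ℂ)^(2*m)))
      (riemannZeta (1+x) + riemannZeta (1-x)) :=
    (Function.Injective.hasSum_iff hinj hcov).mpr h3
  have h5 : (fun m : ℕ => (γ (2*m) : ℂ) * ((x:ℂ)^(2*m) + (-x:ℂ)^(2*m)))
      = fun m : ℕ => (((2 * γ (2*m)) * (x^2) ^ m : ℝ) : ℂ) := by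
    funext m
    have : ((-x:ℂ))^(2*m) = ((x:ℂ))^(2*m) := (Even.neg_pow ⟨m, by ring⟩ _)
    rw [this]
    push_cast
    rw [pow_mul]
    ring
  rw [h5] at h4
  have h6 := Complex.hasSum_re h4
  simpa [← Complex.ofReal_pow] using h6

private lemma odd_part {x : ℝ} (hx : x ≠ 0) :
    HasSum (fun m : ℕ => (2 * γ (2*m+1)) * (x^2) ^ m)
      (((riemannZeta (1+x) - riemannZeta (1-x)).re - 2/x) / x) := by
  have h3 := (both_parts hγ hx).2
  have hinj : Function.Injective (fun m : ℕ => 2*m+1) := fun a b h => by simp only at h; omega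
  have hcov : ∀ n : ℕ, n ∉ Set.range (fun m : ℕ => 2*m+1) →
      (γ n : ℂ) * ((x:ℂ)^n - (-x:ℂ)^n) = 0 := by
    intro n hn
    simp only [Set.mem_range, not_exists] at hn
    rcases Nat.even_or_odd n with ⟨r, hr⟩ | ⟨r, hr⟩
    · rw [(show Even n from ⟨r, hr⟩).neg_pow]; ring
    · exact absurd (show 2*r + 1 = n by omega) (hn r)
  have h4 : HasSum (fun m : ℕ => (γ (2*m+1) : ℂ) * ((x:ℂ)^(2*m+1) - (-x:ℂ)^(2*m+1)))
      (riemannZeta (1+x) - riemannZeta (1-x) - 2/x) :=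
    (Function.Injective.hasSum_iff hinj hcov).mpr h3
  have h5 := h4.div_const (x:ℂ)
  have h6 : (fun m : ℕ => (γ (2*m+1) : ℂ) * ((x:ℂ)^(2*m+1) - (-x:ℂ)^(2*m+1)) / x)
      = fun m : ℕ => (((2 * γ (2*m+1)) * (x^2) ^ m : ℝ) : ℂ) := by
    funext m
    have h7 : ((-x:ℂ))^(2*m+1) = -((x:ℂ))^(2*m+1) := (Odd.neg_pow ⟨m, by ring⟩ _)
    rw [h7]
    have hxC : (x:ℂ) ≠ 0 := by exact_mod_cast hx
    field_simp
    push_cast; ring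
  rw [h6] at h5
  have h8 := Complex.hasSum_re h5
  have h9 : ((riemannZeta (1+(x:ℂ)) - riemannZeta (1-(x:ℂ)) - 2/(x:ℂ)) / (x:ℂ)).re
      = ((riemannZeta (1+x) - riemannZeta (1-x)).re - 2/x) / x := by
    rw [div_ofReal_re]
    congr 1
    rw [Complex.sub_re]
    congr 1
    have : ((2:ℂ)/(x:ℂ)) = (((2/x : ℝ)) : ℂ) := by push_cast; ring
    rw [this, Complex.ofReal_re]
  rw [h9] at h8
  simpa [← Complex.ofReal_pow] using h8


end parts

section contra
variable {γ : ℕ → ℝ}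
  (hγ : ∀ s : ℂ, s ≠ 1 →
      HasSum (fun n : ℕ => (γ n : ℂ) * (s - 1) ^ n) (riemannZeta s - 1 / (s - 1)))

private lemma xk_pos : ∀ k : ℕ, (1:ℝ) ≤ 2*(k:ℝ)+1 := by
  intro k; have := Nat.cast_nonneg (α := ℝ) k; linarith

private lemma xk_tendsto : Tendsto (fun k : ℕ => 2*(k:ℝ)+1) atTop atTop := by
  apply tendsto_atTop_add_const_right
  exact (tendsto_natCast_atTop_atTop).const_mul_atTop two_pos

private lemma vk_tendsto : Tendsto (fun k : ℕ => (2*(k:ℝ)+1)^2) atTop atTop :=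
  tendsto_atTop_mono (fun k => by nlinarith [xk_pos k]) xk_tendsto

private lemma zeta_plus_bound : ∀ k : ℕ, ‖riemannZeta (1 + (Complex.ofReal (2*(k:ℝ)+1)))‖ ≤ 2 := by
  intro k
  have e : (1 + (Complex.ofReal (2*(k:ℝ)+1))) = ((1 + (2*(k:ℝ)+1) : ℝ) : ℂ) := by push_cast; ring
  rw [e]
  exact zeta_norm_le (by have := Nat.cast_nonneg (α := ℝ) k; linarith)

private lemma zeta_minus_bound : ∀ k : ℕ, ‖riemannZeta (1 - (Complex.ofReal (2*(k:ℝ)+1)))‖ ≤ 1 := by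
  intro k
  cases k with
  | zero =>
    have e : (1 - (Complex.ofReal (2*((0:ℕ):ℝ)+1))) = 0 := by push_cast; ring
    rw [e, riemannZeta_zero]
    rw [norm_div]
    simp
    norm_num
  | succ k =>
    have e : (1 - (Complex.ofReal (2*((k+1:ℕ):ℝ)+1))) = -2 * (((k:ℕ):ℂ) + 1) := by push_cast; ring
    rw [e, riemannZeta_neg_two_mul_nat_add_one]
    simp

include hγ

private lemma even_contra {N : ℕ} (hN : 1 ≤ N)
    (hsign : (∀ m, N ≤ m → 0 ≤ γ (2*m)) ∨ (∀ m, N ≤ m → γ (2*m) ≤ 0)) : False := by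
  have hx1 := xk_pos
  have hx0 : ∀ k : ℕ, (2*(k:ℝ)+1) ≠ 0 := fun k => by have := hx1 k; linarith
  have hv1 : ∀ k : ℕ, (1:ℝ) ≤ (2*(k:ℝ)+1)^2 := fun k => one_le_pow₀ (hx1 k)
  have hS : ∀ k : ℕ, HasSum (fun m => (2*γ (2*m)) * (((2*(k:ℝ)+1))^2)^m)
      ((riemannZeta (1 + (Complex.ofReal (2*(k:ℝ)+1))) + riemannZeta (1 - (Complex.ofReal (2*(k:ℝ)+1)))).re) :=
    fun k => even_part hγ (hx0 k)
  have hB : ∀ k : ℕ,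
      |((riemannZeta (1 + (Complex.ofReal (2*(k:ℝ)+1))) + riemannZeta (1 - (Complex.ofReal (2*(k:ℝ)+1)))).re)| ≤ 3 := by
    intro k
    calc |((riemannZeta (1 + (Complex.ofReal (2*(k:ℝ)+1))) + riemannZeta (1 - (Complex.ofReal (2*(k:ℝ)+1)))).re)|
        ≤ ‖riemannZeta (1 + (Complex.ofReal (2*(k:ℝ)+1))) + riemannZeta (1 - (Complex.ofReal (2*(k:ℝ)+1)))‖ := by
          exact Complex.abs_re_le_norm _
      _ ≤ ‖riemannZeta (1 + (Complex.ofReal (2*(k:ℝ)+1)))‖ + ‖riemannZeta (1 - (Complex.ofReal (2*(k:ℝ)+1)))‖ :=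
          norm_add_le _ _
      _ ≤ 3 := by linarith [zeta_plus_bound k, zeta_minus_bound k]
  have hsign' : (∀ m, N ≤ m → 0 ≤ 2*γ (2*m)) ∨ (∀ m, N ≤ m → 2*γ (2*m) ≤ 0) := by
    rcases hsign with h | h
    · exact Or.inl fun m hm => by linarith [h m hm]
    · exact Or.inr fun m hm => by linarith [h m hm]
  have hconst := lemD hv1 vk_tendsto hS hB hN hsign'
  have h0 := hconst 0
  have h1 := hconst 1
  have e20 : (1:ℂ) + (Complex.ofReal (2*((0:ℕ):ℝ)+1)) = 2 := by push_cast; ring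
  have e21 : (1:ℂ) - (Complex.ofReal (2*((0:ℕ):ℝ)+1)) = 0 := by push_cast; ring
  have e40 : (1:ℂ) + (Complex.ofReal (2*((1:ℕ):ℝ)+1)) = 4 := by push_cast; ring
  have e41 : (1:ℂ) - (Complex.ofReal (2*((1:ℕ):ℝ)+1)) = -2 * (((0:ℕ):ℂ) + 1) := by push_cast; ring
  rw [e20, e21, riemannZeta_two, riemannZeta_zero] at h0
  rw [e40, e41, riemannZeta_neg_two_mul_nat_add_one 0, riemannZeta_four] at h1
  rw [show ((Real.pi:ℂ)^2/6 + (-1)/2) = ((Real.pi^2/6 - 1/2 : ℝ) : ℂ) by push_cast; ring,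
    Complex.ofReal_re] at h0
  rw [show ((Real.pi:ℂ)^4/90 + 0) = ((Real.pi^4/90 : ℝ) : ℂ) by push_cast; ring,
    Complex.ofReal_re] at h1
  have hcontra : Real.pi^2/6 - 1/2 = Real.pi^4/90 := by rw [h0, h1]
  have hp1 : Real.pi^2 < 9.9225 := by nlinarith [Real.pi_gt_d2, Real.pi_lt_d2]
  have hp2 : 9.8596 < Real.pi^2 := by nlinarith [Real.pi_gt_d2, Real.pi_lt_d2]
  have hp3 : Real.pi^4 < 98.456 := by nlinarith [hp1, sq_nonneg (Real.pi^2)]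
  nlinarith [hp2, hp3]

private lemma odd_contra {N : ℕ} (hN : 1 ≤ N)
    (hsign : (∀ m, N ≤ m → 0 ≤ γ (2*m+1)) ∨ (∀ m, N ≤ m → γ (2*m+1) ≤ 0)) : False := by
  have hx1 := xk_pos
  have hx0 : ∀ k : ℕ, (2*(k:ℝ)+1) ≠ 0 := fun k => by have := hx1 k; linarith
  have hxpos : ∀ k : ℕ, (0:ℝ) < 2*(k:ℝ)+1 := fun k => by have := hx1 k; linarith
  have hv1 : ∀ k : ℕ, (1:ℝ) ≤ (2*(k:ℝ)+1)^2 := fun k => one_le_pow₀ (hx1 k)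
  have hS : ∀ k : ℕ, HasSum (fun m => (2*γ (2*m+1)) * (((2*(k:ℝ)+1))^2)^m)
      (((riemannZeta (1 + (Complex.ofReal (2*(k:ℝ)+1))) - riemannZeta (1 - (Complex.ofReal (2*(k:ℝ)+1)))).re
        - 2/(2*(k:ℝ)+1)) / (2*(k:ℝ)+1)) :=
    fun k => odd_part hγ (hx0 k)
  have hnum : ∀ k : ℕ,
      |((riemannZeta (1 + (Complex.ofReal (2*(k:ℝ)+1))) - riemannZeta (1 - (Complex.ofReal (2*(k:ℝ)+1)))).re
        - 2/(2*(k:ℝ)+1))| ≤ 5 := by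
    intro k
    have h2x : |2/(2*(k:ℝ)+1)| ≤ 2 := by
      rw [abs_div, _root_.abs_of_nonneg (le_of_lt (hxpos k)),
        _root_.abs_of_nonneg (by norm_num : (0:ℝ) ≤ 2), div_le_iff₀ (hxpos k)]
      nlinarith [hx1 k]
    have h3 : |((riemannZeta (1 + (Complex.ofReal (2*(k:ℝ)+1))) - riemannZeta (1 - (Complex.ofReal (2*(k:ℝ)+1)))).re)|
        ≤ 3 := by
      calc |((riemannZeta (1 + (Complex.ofReal (2*(k:ℝ)+1))) - riemannZeta (1 - (Complex.ofReal (2*(k:ℝ)+1)))).re)|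
          ≤ ‖riemannZeta (1 + (Complex.ofReal (2*(k:ℝ)+1))) - riemannZeta (1 - (Complex.ofReal (2*(k:ℝ)+1)))‖ := by
            exact Complex.abs_re_le_norm _
        _ ≤ ‖riemannZeta (1 + (Complex.ofReal (2*(k:ℝ)+1)))‖ + ‖riemannZeta (1 - (Complex.ofReal (2*(k:ℝ)+1)))‖ :=
            norm_sub_le _ _
        _ ≤ 3 := by linarith [zeta_plus_bound k, zeta_minus_bound k]
    calc |((riemannZeta (1 + (Complex.ofReal (2*(k:ℝ)+1))) - riemannZeta (1 - (Complex.ofReal (2*(k:ℝ)+1)))).re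
          - 2/(2*(k:ℝ)+1))|
        ≤ |((riemannZeta (1 + (Complex.ofReal (2*(k:ℝ)+1))) - riemannZeta (1 - (Complex.ofReal (2*(k:ℝ)+1)))).re)|
          + |2/(2*(k:ℝ)+1)| := abs_sub _ _
      _ ≤ 5 := by linarith
  have hB : ∀ k : ℕ,
      |(((riemannZeta (1 + (Complex.ofReal (2*(k:ℝ)+1))) - riemannZeta (1 - (Complex.ofReal (2*(k:ℝ)+1)))).re
        - 2/(2*(k:ℝ)+1)) / (2*(k:ℝ)+1))| ≤ 5 := by
    intro k
    rw [abs_div, _root_.abs_of_nonneg (le_of_lt (hxpos k))]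
    exact le_trans (div_le_self (abs_nonneg _) (hx1 k)) (hnum k)
  have hsign' : (∀ m, N ≤ m → 0 ≤ 2*γ (2*m+1)) ∨ (∀ m, N ≤ m → 2*γ (2*m+1) ≤ 0) := by
    rcases hsign with h | h
    · exact Or.inl fun m hm => by linarith [h m hm]
    · exact Or.inr fun m hm => by linarith [h m hm]
  have hconst := lemD hv1 vk_tendsto hS hB hN hsign'
  have hc0 : |2*γ (2*0+1)| ≤ 0 := by
    apply limit_le_zero xk_tendsto (B := 5)
    intro k
    rw [← hconst k, abs_div, _root_.abs_of_nonneg (le_of_lt (hxpos k)),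
      div_le_div_iff₀ (hxpos k) (hxpos k)]
    exact mul_le_mul_of_nonneg_right (hnum k) (le_of_lt (hxpos k))
  have hb0 : 2*γ (2*0+1) = 0 := abs_eq_zero.mp (le_antisymm hc0 (abs_nonneg _))
  have h1 := hconst 1
  rw [hb0] at h1
  have e40 : (1:ℂ) + (Complex.ofReal (2*((1:ℕ):ℝ)+1)) = 4 := by push_cast; ring
  have e41 : (1:ℂ) - (Complex.ofReal (2*((1:ℕ):ℝ)+1)) = -2 * (((0:ℕ):ℂ) + 1) := by push_cast; ring
  rw [e40, e41, riemannZeta_neg_two_mul_nat_add_one 0, riemannZeta_four] at h1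
  rw [show ((Real.pi:ℂ)^4/90 - 0) = ((Real.pi^4/90 : ℝ) : ℂ) by push_cast; ring,
    Complex.ofReal_re] at h1
  have hx13 : 2*((1:ℕ):ℝ)+1 = 3 := by norm_num
  rw [hx13] at h1
  rcases div_eq_zero_iff.mp h1 with h2 | h2
  · have hq1 : (9:ℝ) < Real.pi^2 := by nlinarith [Real.pi_gt_three]
    have hq2 : (81:ℝ) < Real.pi^4 := by nlinarith [hq1]
    linarith
  · norm_num at h2

end contra

private lemma finite_tail {S : Set ℕ} (hS : ¬ S.Infinite) :
    ∃ N : ℕ, 1 ≤ N ∧ ∀ n, N ≤ n → n ∉ S := by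
  obtain ⟨b, hb⟩ := (Set.not_infinite.mp hS).bddAbove
  exact ⟨b+1, by omega, fun n hn hmem => by have := hb hmem; omega⟩

/-- Each of the four inequalities `γ_{2n} > 0`, `γ_{2n} < 0`, `γ_{2n-1} > 0`, `γ_{2n-1} < 0`
holds for infinitely many positive integers `n`. -/
theorem stieltjes_even_odd_sign_changes (γ : ℕ → ℝ)
    (hγ : ∀ s : ℂ, s ≠ 1 →
      HasSum (fun n : ℕ => (γ n : ℂ) * (s - 1) ^ n) (riemannZeta s - 1 / (s - 1))) :
    {n : ℕ | 0 < n ∧ 0 < γ (2 * n)}.Infinite ∧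
    {n : ℕ | 0 < n ∧ γ (2 * n) < 0}.Infinite ∧
    {n : ℕ | 0 < n ∧ 0 < γ (2 * n - 1)}.Infinite ∧
    {n : ℕ | 0 < n ∧ γ (2 * n - 1) < 0}.Infinite := by
  refine ⟨?_, ?_, ?_, ?_⟩
  · by_contra h
    obtain ⟨N, hN1, hN⟩ := finite_tail h
    exact even_contra hγ hN1 (Or.inr fun m hm =>
      le_of_not_gt fun hpos => hN m hm ⟨by omega, hpos⟩)
  · by_contra h
    obtain ⟨N, hN1, hN⟩ := finite_tail h
    exact even_contra hγ hN1 (Or.inl fun m hm =>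
      le_of_not_gt fun hneg => hN m hm ⟨by omega, hneg⟩)
  · by_contra h
    obtain ⟨N, hN1, hN⟩ := finite_tail h
    refine odd_contra hγ hN1 (Or.inr fun m hm =>
      le_of_not_gt fun hpos => hN (m+1) (by omega) ⟨by omega, ?_⟩)
    rw [show 2*(m+1)-1 = 2*m+1 from by omega]
    exact hpos
  · by_contra h
    obtain ⟨N, hN1, hN⟩ := finite_tail h
    refine odd_contra hγ hN1 (Or.inl fun m hm =>
      le_of_not_gt fun hneg => hN (m+1) (by omega) ⟨by omega, ?_⟩)
    rw [show 2*(m+1)-1 = 2*m+1 from by omega]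
    exact hneg
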